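/- For integers m > 1 and indeterminates x, y, q, the quantity K_m(x,y) := ∑_{r=1}^{m} ([r-1]! ((q-1)x - y)^{r-1} q^{-mr} / ∏_{a=1}^{r}(x + [a-1]y)) · e_r(q, ..., q^m) satisfies the recurrence K_m(x,y) = 1/x + K_{m-1}(x+y, qy). -/

import Mathlib

noncomputable section

/-- the field of rational functions in the indeterminates `x, y, q` over ℚ -/
abbrev K3 : Type := FractionRing (MvPolynomial (Fin 3) ℚ)

def xv : K3 := algebraMap (MvPolynomial (Fin 3) ℚ) K3 (MvPolynomial.X 0)
def yv : K3 := algebraMap (MvPolynomial (Fin 3) ℚ) K3 (MvPolynomial.X 1)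
def qv : K3 := algebraMap (MvPolynomial (Fin 3) ℚ) K3 (MvPolynomial.X 2)

/-- the q-integer [n] = (1 - q^n)/(1 - q) -/
def qint (n : ℕ) : K3 := (1 - qv ^ n) / (1 - qv)

/-- the q-factorial [k]! with [0]! = 1 -/
def qfact (k : ℕ) : K3 := ∏ a ∈ Finset.range k, qint (a + 1)

/-- K_m(x,y) := ∑_{r=1}^{m} ([r-1]! ((q-1)x-y)^{r-1} q^{-mr} / ∏_{a=1}^{r}(x+[a-1]y))
      · e_r(q, q², ..., q^m) -/
def Kfun (m : ℕ) (x y : K3) : K3 :=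
  ∑ r ∈ Finset.Icc 1 m,
    (qfact (r - 1) * ((qv - 1) * x - y) ^ (r - 1) * (qv ^ (m * r))⁻¹ /
        ∏ a ∈ Finset.Icc 1 r, (x + qint (a - 1) * y)) *
      ∑ T ∈ (Finset.Icc 1 m).powersetCard r, ∏ i ∈ T, qv ^ i

lemma nzK {p : MvPolynomial (Fin 3) ℚ} (h : p ≠ 0) :
    algebraMap (MvPolynomial (Fin 3) ℚ) K3 p ≠ 0 := by
  exact (map_ne_zero_iff _ (IsFractionRing.injective _ _)).2 h

lemma hx0 : xv ≠ 0 := nzK (MvPolynomial.X_ne_zero 0)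
lemma hq0 : qv ≠ 0 := nzK (MvPolynomial.X_ne_zero 2)

lemma hq1 : (1 : K3) - qv ≠ 0 := by
  have h : (1 - MvPolynomial.X 2 : MvPolynomial (Fin 3) ℚ) ≠ 0 := by
    intro h
    have := congrArg (MvPolynomial.eval (fun _ => (0:ℚ))) h
    simp at this
  have := nzK h
  simpa [qv] using this

lemma qint_zero : qint 0 = 0 := by simp [qint]

lemma qint_succ (a : ℕ) : qint (a+1) = 1 + qv * qint a := by
  rw [qint, qint]
  field_simp [hq1]
  ring

lemma lin_ne (a : ℕ) : xv + qint a * yv ≠ 0 := by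
  have key : (1 - qv) * (xv + qint a * yv) = (1-qv)*xv + (1 - qv^a)*yv := by
    rw [qint, mul_add,
      show (1-qv) * ((1 - qv^a)/(1-qv) * yv) = (1 - qv^a)/(1-qv) * (1-qv) * yv from by ring,
      div_mul_cancel₀ _ hq1]
  have hpoly : ((1 - MvPolynomial.X 2) * MvPolynomial.X 0
      + (1 - MvPolynomial.X 2 ^ a) * MvPolynomial.X 1 : MvPolynomial (Fin 3) ℚ) ≠ 0 := by
    intro h
    have := congrArg (MvPolynomial.eval (fun i => if i = 2 then (0:ℚ) else 1)) h
    rcases a with _ | a <;> simp at this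
  have h2 : (1-qv)*xv + (1 - qv^a)*yv ≠ 0 := by
    have := nzK hpoly
    simpa [qv, xv, yv, sub_mul, mul_sub] using this
  intro h
  rw [h, mul_zero] at key
  exact h2 key.symm

def Pfun (r : ℕ) : K3 := ∏ a ∈ Finset.Icc 1 r, (xv + qint (a - 1) * yv)

lemma Pfun_ne (r : ℕ) : Pfun r ≠ 0 :=
  Finset.prod_ne_zero_iff.2 fun a _ => lin_ne _

lemma Pfun_succ (r : ℕ) : Pfun (r + 1) = Pfun r * (xv + qint r * yv) := by
  rw [Pfun, Pfun, Finset.prod_Icc_succ_top (Nat.le_add_left 1 r)]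
  simp

lemma Pfun_one : Pfun 1 = xv := by
  simp [Pfun, qint_zero]

-- shifted factor
lemma shift_factor (a : ℕ) :
    xv + yv + qint a * (qv * yv) = xv + qint (a + 1) * yv := by
  rw [qint_succ]; ring

def Qfun (r : ℕ) : K3 := ∏ a ∈ Finset.Icc 1 r, (xv + yv + qint (a - 1) * (qv * yv))

lemma xQ (r : ℕ) : xv * Qfun r = Pfun (r + 1) := by
  induction r with
  | zero => simp [Qfun, Pfun_succ, Pfun, qint_zero]
  | succ n ih =>
      rw [Qfun, Finset.prod_Icc_succ_top (Nat.le_add_left 1 n), ← Qfun, ← mul_assoc, ih,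
        Nat.add_sub_cancel, shift_factor, ← Pfun_succ]

-- Pascal recurrence for the elementary symmetric sums
lemma esum_pascal (m r : ℕ) :
    ∑ T ∈ (Finset.Icc 1 (m+1)).powersetCard (r+1), ∏ i ∈ T, qv ^ i
      = (∑ T ∈ (Finset.Icc 1 m).powersetCard (r+1), ∏ i ∈ T, qv ^ i)
        + qv ^ (m+1) * ∑ T ∈ (Finset.Icc 1 m).powersetCard r, ∏ i ∈ T, qv ^ i := by
  have hnot : (m+1) ∉ Finset.Icc 1 m := by simp
  have hins : Finset.Icc 1 (m+1) = insert (m+1) (Finset.Icc 1 m) := by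
    ext a; simp [Nat.lt_succ_iff, Nat.le_succ_iff]; omega
  rw [hins, Finset.powersetCard_succ_insert hnot]
  rw [Finset.sum_union]
  · congr 1
    rw [Finset.sum_image]
    · rw [Finset.mul_sum]
      refine Finset.sum_congr rfl fun T hT => ?_
      have hTm : (m+1) ∉ T := fun hc => hnot ((Finset.mem_powersetCard.1 hT).1 hc)
      rw [Finset.prod_insert hTm]
    · intro T hT T' hT' hE
      have h1 : (m+1) ∉ T := fun hc => hnot ((Finset.mem_powersetCard.1 hT).1 hc)
      have h2 : (m+1) ∉ T' := fun hc => hnot ((Finset.mem_powersetCard.1 hT').1 hc)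
      have := congrArg (Finset.erase · (m+1)) hE
      simpa [Finset.erase_insert, h1, h2] using this
  · rw [Finset.disjoint_left]
    intro T hT hT2
    have h1 : (m+1) ∉ T := fun hc => hnot ((Finset.mem_powersetCard.1 hT).1 hc)
    obtain ⟨S, hS, rfl⟩ := Finset.mem_image.1 hT2
    exact h1 (Finset.mem_insert_self _ _)

lemma esum_zero (m : ℕ) : ∑ T ∈ (Finset.Icc 1 m).powersetCard 0, ∏ i ∈ T, qv ^ i = 1 := by
  simp

lemma esum_top (m : ℕ) :
    ∑ T ∈ (Finset.Icc 1 m).powersetCard (m+1), ∏ i ∈ T, qv ^ i = 0 := by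
  rw [Finset.powersetCard_eq_empty.2 (by simp [Nat.card_Icc]), Finset.sum_empty]

lemma qfact_succ (s : ℕ) : qfact (s+1) = qfact s * qint (s+1) :=
  Finset.prod_range_succ _ _

lemma core_id (s : ℕ) :
    xv + qint (s+1) * yv + qint (s+1) * ((qv-1)*xv - yv) = qv^(s+1) * xv := by
  rw [qint]
  field_simp [hq1]
  ring

lemma Qfun_eq (r : ℕ) : Qfun r = Pfun r * (xv + qint r * yv) / xv := by
  rw [← Pfun_succ, eq_div_iff hx0, mul_comm, xQ]

lemma aux_field (F Z z t p w x A B C : K3) (hp : p ≠ 0) (hw : w ≠ 0)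
    (hA : A ≠ 0) (hB : B ≠ 0) (hC : C ≠ 0) (core : w + t * z = B * x) :
    F * Z * (A*B)⁻¹ / p + F * t * (Z * z) * (A*B*C)⁻¹ / (p * w) * C
      = F * Z * A⁻¹ / (p * w / x) := by
  field_simp
  linear_combination (F*Z) * core

lemma coeff_id (n s : ℕ) :
    qfact s * ((qv-1)*xv - yv)^s * (qv^((n+1)*(s+1)))⁻¹ / Pfun (s+1)
      + qfact (s+1) * ((qv-1)*xv - yv)^(s+1) * (qv^((n+1)*(s+2)))⁻¹ / Pfun (s+2) * qv^(n+1)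
    = qfact s * ((qv-1)*xv - yv)^s * (qv^(n*(s+1)))⁻¹ / Qfun (s+1) := by
  have hw := lin_ne (s+1)
  have hp := Pfun_ne (s+1)
  have core := core_id s
  rw [qfact_succ, Qfun_eq,
    show Pfun (s+2) = Pfun (s+1) * (xv + qint (s+1) * yv) from Pfun_succ (s+1),
    show (n+1)*(s+1) = n*(s+1)+(s+1) by ring, pow_add qv (n*(s+1)) (s+1),
    show (n+1)*(s+2) = n*(s+1)+(s+1)+(n+1) by ring, pow_add qv (n*(s+1)+(s+1)) (n+1),
    pow_add qv (n*(s+1)) (s+1),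
    pow_succ ((qv-1)*xv - yv) s]
  exact aux_field (qfact s) _ _ _ _ _ _ _ _ _ hp hw
    (pow_ne_zero _ hq0) (pow_ne_zero _ hq0) (pow_ne_zero _ hq0) core

def esum (k r : ℕ) : K3 := ∑ T ∈ (Finset.Icc 1 k).powersetCard r, ∏ i ∈ T, qv ^ i

lemma esum_pascal' (k r : ℕ) :
    esum (k+1) (r+1) = esum k (r+1) + qv ^ (k+1) * esum k r := esum_pascal k r

lemma esum_zero' (k : ℕ) : esum k 0 = 1 := esum_zero k

lemma esum_top' (k : ℕ) : esum k (k+1) = 0 := esum_top k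

lemma sum_Icc_one (k : ℕ) (f : ℕ → K3) :
    ∑ r ∈ Finset.Icc 1 k, f r = ∑ i ∈ Finset.range k, f (i+1) := by
  rw [← Finset.Ico_add_one_right_eq_Icc, Finset.sum_Ico_eq_sum_range]
  exact Finset.sum_congr (by norm_num) fun i _ => by rw [Nat.add_comm]

lemma Kfun_left (k : ℕ) : Kfun k xv yv
    = ∑ i ∈ Finset.range k,
        (qfact i * ((qv-1)*xv - yv)^i * (qv^(k*(i+1)))⁻¹ / Pfun (i+1)) * esum k (i+1) := by
  rw [Kfun, sum_Icc_one]
  rfl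

lemma Kfun_right (k : ℕ) : Kfun k (xv + yv) (qv * yv)
    = ∑ i ∈ Finset.range k,
        (qfact i * ((qv-1)*xv - yv)^i * (qv^(k*(i+1)))⁻¹ / Qfun (i+1)) * esum k (i+1) := by
  rw [Kfun, sum_Icc_one]
  refine Finset.sum_congr rfl fun i _ => ?_
  rw [show (qv-1)*(xv+yv) - qv*yv = (qv-1)*xv - yv from by ring]
  rfl

/-- for m > 1, K_m(x,y) = 1/x + K_{m-1}(x+y, qy). -/
theorem stmt5 (m : ℕ) (hm : 1 < m) :
    Kfun m xv yv = xv⁻¹ + Kfun (m - 1) (xv + yv) (qv * yv) := by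
  obtain ⟨n, rfl⟩ : ∃ n, m = n + 2 := ⟨m - 2, by omega⟩
  rw [show n+2-1 = n+1 from rfl, Kfun_left (n+2), Kfun_right (n+1)]
  set z := (qv-1)*xv - yv with hz
  have step1 : ∑ i ∈ Finset.range (n+2),
      (qfact i * z^i * (qv^((n+2)*(i+1)))⁻¹ / Pfun (i+1)) * esum (n+2) (i+1)
      = (∑ i ∈ Finset.range (n+2),
          (qfact i * z^i * (qv^((n+2)*(i+1)))⁻¹ / Pfun (i+1)) * esum (n+1) (i+1))
        + ∑ i ∈ Finset.range (n+2),
          (qfact i * z^i * (qv^((n+2)*(i+1)))⁻¹ / Pfun (i+1)) * qv^(n+2) * esum (n+1) i := by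
    rw [← Finset.sum_add_distrib]
    refine Finset.sum_congr rfl fun i _ => ?_
    rw [show esum (n+2) (i+1) = esum (n+1) (i+1) + qv^(n+2) * esum (n+1) i
      from esum_pascal' (n+1) i]
    ring
  rw [step1]
  rw [Finset.sum_range_succ _ (n+1), esum_top' (n+1), mul_zero, add_zero]
  rw [Finset.sum_range_succ'
    (fun i => (qfact i * z^i * (qv^((n+2)*(i+1)))⁻¹ / Pfun (i+1)) * qv^(n+2) * esum (n+1) i)
    (n+1)]
  have hc0 : (qfact 0 * z^0 * (qv^((n+2)*(0+1)))⁻¹ / Pfun (0+1)) * qv^(n+2) * esum (n+1) 0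
      = xv⁻¹ := by
    rw [esum_zero', Pfun_one, mul_one, show (n+2)*(0+1) = n+2 from by ring, pow_zero,
      qfact, Finset.prod_range_zero, one_mul, one_mul, div_mul_eq_mul_div,
      inv_mul_cancel₀ (pow_ne_zero _ hq0 : qv^(n+2) ≠ 0), one_div]
  rw [hc0, ← add_assoc, ← Finset.sum_add_distrib]
  rw [add_comm (∑ i ∈ Finset.range (n+1), _) xv⁻¹]
  congr 1
  refine Finset.sum_congr rfl fun i _ => ?_
  have key := coeff_id (n+1) i
  calc (qfact i * z^i * (qv^((n+2)*(i+1)))⁻¹ / Pfun (i+1)) * esum (n+1) (i+1)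
        + (qfact (i+1) * z^(i+1) * (qv^((n+2)*(i+2)))⁻¹ / Pfun (i+2)) * qv^(n+2)
          * esum (n+1) (i+1)
      = (qfact i * z^i * (qv^((n+2)*(i+1)))⁻¹ / Pfun (i+1)
          + qfact (i+1) * z^(i+1) * (qv^((n+2)*(i+2)))⁻¹ / Pfun (i+2) * qv^(n+2))
          * esum (n+1) (i+1) := by ring
    _ = (qfact i * z^i * (qv^((n+1)*(i+1)))⁻¹ / Qfun (i+1)) * esum (n+1) (i+1) := by
        rw [show qfact i * z^i * (qv^((n+2)*(i+1)))⁻¹ / Pfun (i+1)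
          + qfact (i+1) * z^(i+1) * (qv^((n+2)*(i+2)))⁻¹ / Pfun (i+2) * qv^(n+2)
          = qfact i * z^i * (qv^((n+1)*(i+1)))⁻¹ / Qfun (i+1) from key]

end
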